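/- Let A_n be a Hermitian positive definite matrix of size n with main diagonal D_n (also positive definite), let p_n^k ∈ ℂ^{n×k} (k < n) be a full-rank matrix, and let V_n ∈ ℂ^{n×n}. Suppose there exists α > 0 such that ‖V_n x‖²_{A_n} ≤ ‖x‖²_{A_n} − α ‖x‖²_{A_n D_n^{-1} A_n} for all x ∈ ℂ^n (smoothing property), and there exists γ > 0 such that min_{y ∈ ℂ^k} ‖x − p_n^k y‖²_{D_n} ≤ γ ‖x‖²_{A_n} for all x ∈ ℂ^n (approximation property). Then γ ≥ α, and the two-grid iteration matrix TGM = V_n^{ν} [I_n − p_n^k ((p_n^k)^H A_n p_n^k)^{-1} (p_n^k)^H A_n] with ν = 1 post-smoothing step satisfies ‖TGM‖_{A_n} ≤ √(1 − α/γ). -/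

import Mathlib

open Matrix
open scoped Matrix ComplexConjugate ComplexOrder

noncomputable section
set_option maxHeartbeats 1000000

/-- The squared weighted Euclidean (semi-)norm `‖x‖_X² = x^H X x` (its real part). -/
def wnormSq {n : ℕ} (X : Matrix (Fin n) (Fin n) ℂ) (x : Fin n → ℂ) : ℝ :=
  (dotProduct (star x) (X.mulVec x)).re

/-- Cauchy–Schwarz for a positive semidefinite weight matrix. -/
lemma tg_cs {m : ℕ} {M : Matrix (Fin m) (Fin m) ℂ} (hM : M.PosSemidef) (u v : Fin m → ℂ) :
    ‖star u ⬝ᵥ M *ᵥ v‖ ^ 2 ≤ (star u ⬝ᵥ M *ᵥ u).re * (star v ⬝ᵥ M *ᵥ v).re := by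
  letI c : PreInnerProductSpace.Core ℂ (Fin m → ℂ) :=
    { inner := fun x y => dotProduct (star x) (M *ᵥ y)
      conj_inner_symm := fun x y => by
        show (starRingEnd ℂ) (dotProduct (star y) (M *ᵥ x)) = dotProduct (star x) (M *ᵥ y)
        rw [star_dotProduct, starRingEnd_apply, star_star, star_mulVec, dotProduct_mulVec,
          hM.isHermitian.eq]
      re_inner_nonneg := fun x => hM.re_dotProduct_nonneg x
      add_left := by simp only [star_add, add_dotProduct, forall_const, implies_true]
      smul_left := fun x y r => by
        rw [← smul_eq_mul, ← smul_dotProduct, starRingEnd_apply, ← star_smul] }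
  have h := InnerProductSpace.Core.inner_mul_inner_self_le (𝕜 := ℂ) (F := Fin m → ℂ) u v
  rw [← InnerProductSpace.Core.norm_inner_symm u v, ← sq] at h
  exact h

lemma tg_dot_shift {a b : ℕ} (M : Matrix (Fin a) (Fin b) ℂ) (u : Fin b → ℂ) (v : Fin a → ℂ) :
    star (M *ᵥ u) ⬝ᵥ v = star u ⬝ᵥ (Mᴴ *ᵥ v) := by
  rw [star_mulVec, ← dotProduct_mulVec]

lemma tg_dot_conj {a : ℕ} (u v : Fin a → ℂ) : star u ⬝ᵥ v = star (star v ⬝ᵥ u) := by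
  simp [dotProduct, mul_comm]

theorem two_grid_convergence (n k : ℕ) (hkn : k < n)
    (A : Matrix (Fin n) (Fin n) ℂ) (hA : A.PosDef)
    (hD : (Matrix.diagonal fun i => A i i).PosDef)
    (p : Matrix (Fin n) (Fin k) ℂ) (hp : Function.Injective p.mulVec)
    (V : Matrix (Fin n) (Fin n) ℂ) (α γ : ℝ) (hα : 0 < α) (hγ : 0 < γ)
    (hsmooth : ∀ x : Fin n → ℂ,
      wnormSq A (V.mulVec x) ≤
        wnormSq A x - α * wnormSq (A * (Matrix.diagonal fun i => A i i)⁻¹ * A) x)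
    (happrox : ∀ x : Fin n → ℂ, ∃ y : Fin k → ℂ,
      wnormSq (Matrix.diagonal fun i => A i i) (x - p.mulVec y) ≤ γ * wnormSq A x) :
    α ≤ γ ∧
      ∀ x : Fin n → ℂ,
        wnormSq A
            ((V * ((1 : Matrix (Fin n) (Fin n) ℂ) - p * (pᴴ * A * p)⁻¹ * pᴴ * A)).mulVec x)
          ≤ (1 - α / γ) * wnormSq A x := by
  classical
  set D : Matrix (Fin n) (Fin n) ℂ := Matrix.diagonal fun i => A i i with hDdef
  set B : Matrix (Fin k) (Fin k) ℂ := pᴴ * A * p with hBdef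
  set T : Matrix (Fin n) (Fin n) ℂ :=
    (1 : Matrix (Fin n) (Fin n) ℂ) - p * B⁻¹ * pᴴ * A with hTdef
  have hwnorm : ∀ (X : Matrix (Fin n) (Fin n) ℂ) (x : Fin n → ℂ),
      wnormSq X x = (star x ⬝ᵥ X *ᵥ x).re := fun X x => rfl
  -- B is positive definite, hence invertible
  have hB : B.PosDef := by
    rw [posDef_iff_dotProduct_mulVec]
    constructor
    · show Bᴴ = B
      rw [hBdef, conjTranspose_mul, conjTranspose_mul, conjTranspose_conjTranspose,
        hA.isHermitian.eq, Matrix.mul_assoc]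
    · intro y hy
      have hpy : p *ᵥ y ≠ 0 := by
        intro h
        exact hy (hp (by simpa using h))
      have key : star y ⬝ᵥ B *ᵥ y = star (p *ᵥ y) ⬝ᵥ A *ᵥ (p *ᵥ y) := by
        rw [tg_dot_shift p y, hBdef]
        rw [← mulVec_mulVec, ← mulVec_mulVec]
      rw [key]
      exact hA.dotProduct_mulVec_pos hpy
  have hBBinv : B * B⁻¹ = 1 :=
    Matrix.mul_nonsing_inv B ((Matrix.isUnit_iff_isUnit_det B).mp hB.isUnit)
  have hDDinv : D * D⁻¹ = 1 :=
    Matrix.mul_nonsing_inv D ((Matrix.isUnit_iff_isUnit_det D).mp hD.isUnit)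
  -- projection property : pᴴ A T = 0
  have hPT : (pᴴ * A) * T = 0 := by
    rw [hTdef, Matrix.mul_sub, Matrix.mul_one]
    have h1 : (pᴴ * A) * (p * B⁻¹ * pᴴ * A) = B * (B⁻¹ * (pᴴ * A)) := by
      rw [hBdef]; simp only [Matrix.mul_assoc]
    rw [h1, ← Matrix.mul_assoc, hBBinv, Matrix.one_mul, sub_self]
  have hkerT : ∀ x : Fin n → ℂ, (pᴴ * A) *ᵥ (T *ᵥ x) = 0 := by
    intro x
    rw [mulVec_mulVec, hPT, zero_mulVec]
  -- orthogonality of range p against kernel vectors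
  have horth : ∀ e : Fin n → ℂ, (pᴴ * A) *ᵥ e = 0 →
      ∀ z : Fin k → ℂ, star (p *ᵥ z) ⬝ᵥ A *ᵥ e = 0 := by
    intro e he z
    rw [tg_dot_shift p z, mulVec_mulVec, he, dotProduct_zero]
  have horth2 : ∀ e : Fin n → ℂ, (pᴴ * A) *ᵥ e = 0 →
      ∀ z : Fin k → ℂ, star e ⬝ᵥ A *ᵥ (p *ᵥ z) = 0 := by
    intro e he z
    rw [tg_dot_conj]
    have : star (A *ᵥ (p *ᵥ z)) ⬝ᵥ e = star (p *ᵥ z) ⬝ᵥ A *ᵥ e := by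
      rw [tg_dot_shift A, hA.isHermitian.eq]
    rw [this, horth e he z, star_zero]
  -- Pythagoras : ‖T x‖_A ≤ ‖x‖_A
  have hproj : ∀ x : Fin n → ℂ, wnormSq A (T *ᵥ x) ≤ wnormSq A x := by
    intro x
    set e : Fin n → ℂ := T *ᵥ x with hedef
    set z : Fin k → ℂ := (B⁻¹ * pᴴ * A) *ᵥ x with hzdef
    have he : (pᴴ * A) *ᵥ e = 0 := hkerT x
    have hx : x = e + p *ᵥ z := by
      rw [hedef, hzdef, hTdef, Matrix.sub_mulVec, Matrix.one_mulVec, mulVec_mulVec]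
      have : p * (B⁻¹ * pᴴ * A) = p * B⁻¹ * pᴴ * A := by simp only [Matrix.mul_assoc]
      rw [this]
      ring
    have hsplit : star x ⬝ᵥ A *ᵥ x
        = star e ⬝ᵥ A *ᵥ e + star (p *ᵥ z) ⬝ᵥ A *ᵥ (p *ᵥ z) := by
      conv_lhs => rw [hx]
      rw [star_add, add_dotProduct, mulVec_add, dotProduct_add, dotProduct_add,
        horth e he z, horth2 e he z]
      ring
    have hnn : 0 ≤ (star (p *ᵥ z) ⬝ᵥ A *ᵥ (p *ᵥ z)).re :=
      hA.posSemidef.re_dotProduct_nonneg _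
    rw [hwnorm, hwnorm, hsplit, Complex.add_re]
    linarith
  -- the key inequality : for e ⟂_A range p, ‖e‖_A² ≤ γ ‖e‖_{A D⁻¹ A}²
  have hkey : ∀ e : Fin n → ℂ, (pᴴ * A) *ᵥ e = 0 →
      wnormSq A e ≤ γ * wnormSq (A * D⁻¹ * A) e := by
    intro e he
    obtain ⟨y, hy⟩ := happrox e
    set u : Fin n → ℂ := e - p *ᵥ y with hudef
    set v : Fin n → ℂ := (D⁻¹ * A) *ᵥ e with hvdef
    have hDv : D *ᵥ v = A *ᵥ e := by
      rw [hvdef, mulVec_mulVec, ← Matrix.mul_assoc, hDDinv, Matrix.one_mul]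
    have h1 : star u ⬝ᵥ D *ᵥ v = star e ⬝ᵥ A *ᵥ e := by
      rw [hDv, hudef, star_sub, sub_dotProduct, horth e he y, sub_zero]
    have h2 : star v ⬝ᵥ D *ᵥ v = star e ⬝ᵥ (A * D⁻¹ * A) *ᵥ e := by
      rw [hDv, hvdef, tg_dot_shift (D⁻¹ * A), mulVec_mulVec]
      congr 2
      rw [conjTranspose_mul, hA.isHermitian.eq, Matrix.conjTranspose_nonsing_inv,
        hD.isHermitian.eq, Matrix.mul_assoc]
    have hcs := tg_cs hD.posSemidef u v
    rw [h1, h2] at hcs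
    have hre : (star e ⬝ᵥ A *ᵥ e).re ≤ ‖star e ⬝ᵥ A *ᵥ e‖ := Complex.re_le_norm _
    have hAnn : 0 ≤ (star e ⬝ᵥ A *ᵥ e).re := hA.posSemidef.re_dotProduct_nonneg _
    have hDnn : 0 ≤ (star u ⬝ᵥ D *ᵥ u).re := hD.posSemidef.re_dotProduct_nonneg _
    have hQnn : 0 ≤ (star e ⬝ᵥ (A * D⁻¹ * A) *ᵥ e).re := by
      have := hD.posSemidef.re_dotProduct_nonneg v
      rw [h2] at this
      exact this
    have hyp : (star u ⬝ᵥ D *ᵥ u).re ≤ γ * (star e ⬝ᵥ A *ᵥ e).re := by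
      have := hy
      rw [hwnorm, hwnorm] at this
      rw [hudef]
      exact this
    -- combine : (‖e‖_A²)² ≤ γ ‖e‖_A² ‖e‖_Q²
    have hmain : ((star e ⬝ᵥ A *ᵥ e).re) ^ 2
        ≤ (γ * (star e ⬝ᵥ A *ᵥ e).re) * (star e ⬝ᵥ (A * D⁻¹ * A) *ᵥ e).re := by
      calc ((star e ⬝ᵥ A *ᵥ e).re) ^ 2 ≤ ‖star e ⬝ᵥ A *ᵥ e‖ ^ 2 := by
            nlinarith [hre, hAnn, norm_nonneg (star e ⬝ᵥ A *ᵥ e)]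
        _ ≤ (star u ⬝ᵥ D *ᵥ u).re * (star e ⬝ᵥ (A * D⁻¹ * A) *ᵥ e).re := hcs
        _ ≤ (γ * (star e ⬝ᵥ A *ᵥ e).re) * (star e ⬝ᵥ (A * D⁻¹ * A) *ᵥ e).re := by
            exact mul_le_mul_of_nonneg_right hyp hQnn
    rw [hwnorm, hwnorm]
    rcases eq_or_lt_of_le hAnn with h0 | h0
    · rw [← h0]
      exact mul_nonneg hγ.le hQnn
    · nlinarith [hmain, h0]
  -- positivity of the ADA-norm on nonzero vectors
  have hw2pos : ∀ e : Fin n → ℂ, e ≠ 0 → 0 < wnormSq (A * D⁻¹ * A) e := by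
    intro e he
    have hAe : A *ᵥ e ≠ 0 := by
      intro h
      apply he
      have hinj : Function.Injective A.mulVec :=
        Matrix.mulVec_injective_iff_isUnit.mpr hA.isUnit
      exact hinj (by simpa using h)
    have h2 : star e ⬝ᵥ (A * D⁻¹ * A) *ᵥ e = star (A *ᵥ e) ⬝ᵥ D⁻¹ *ᵥ (A *ᵥ e) := by
      rw [tg_dot_shift A, hA.isHermitian.eq, mulVec_mulVec, mulVec_mulVec]
    rw [hwnorm, h2]
    exact hD.inv.re_dotProduct_pos hAe
  -- existence of a nonzero kernel vector
  have hexist : ∃ e : Fin n → ℂ, e ≠ 0 ∧ (pᴴ * A) *ᵥ e = 0 := by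
    by_contra h
    push_neg at h
    have hinj : Function.Injective (Matrix.mulVecLin (pᴴ * A)) := by
      rw [← LinearMap.ker_eq_bot, LinearMap.ker_eq_bot']
      intro m hm
      by_contra hm0
      exact (h m hm0) hm
    have hle := LinearMap.finrank_le_finrank_of_injective hinj
    simp [Module.finrank_fin_fun] at hle
    omega
  have hαγ : α ≤ γ := by
    obtain ⟨e, he0, heker⟩ := hexist
    have h1 := hsmooth e
    have h2 := hkey e heker
    have h3 : 0 ≤ wnormSq A (V *ᵥ e) := hA.posSemidef.re_dotProduct_nonneg _
    have h4 := hw2pos e he0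
    nlinarith [h1, h2, h3, h4]
  refine ⟨hαγ, fun x => ?_⟩
  have heker := hkerT x
  set e : Fin n → ℂ := T *ᵥ x with hedef
  have hs := hsmooth e
  have hk := hkey e heker
  have hpj := hproj x
  have hgoal : (V * T) *ᵥ x = V *ᵥ e := by rw [← mulVec_mulVec, hedef]
  rw [hgoal]
  have h1aγ : 0 ≤ 1 - α / γ := by
    rw [sub_nonneg]
    exact div_le_one_of_le₀ hαγ (le_of_lt hγ)
  have h5 : α / γ * wnormSq A e ≤ α * wnormSq (A * D⁻¹ * A) e := by
    have h5a := mul_le_mul_of_nonneg_left hk (le_of_lt (div_pos hα hγ))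
    calc α / γ * wnormSq A e ≤ α / γ * (γ * wnormSq (A * D⁻¹ * A) e) := h5a
      _ = α * wnormSq (A * D⁻¹ * A) e := by
          rw [← mul_assoc, div_mul_cancel₀ α (ne_of_gt hγ)]
  have h6 : wnormSq A (V *ᵥ e) ≤ (1 - α / γ) * wnormSq A e := by
    have expand : (1 - α / γ) * wnormSq A e = wnormSq A e - α / γ * wnormSq A e := by ring
    rw [expand]
    linarith [hs, h5]
  exact h6.trans (mul_le_mul_of_nonneg_left hpj h1aγ)
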